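/- For every polytope P ⊆ ℝ^d with dim(P) ≥ 1 (i.e., P contains at least two distinct points), the extension complexity of P equals the extension complexity of the epigraph of its support function: xc(P) = xc(epi(f_P)), where epi(f_P) = {(c,t) ∈ ℝ^d × ℝ : t ≥ f_P(c)}. -/

import Mathlib

open Finset Pointwise

def IsPolytope {d : ℕ} (P : Set (Fin d → ℝ)) : Prop :=
  ∃ V : Finset (Fin d → ℝ), V.Nonempty ∧ P = convexHull ℝ (V : Set (Fin d → ℝ))

noncomputable def suppFn {d : ℕ} (P : Set (Fin d → ℝ)) (c : Fin d → ℝ) : ℝ :=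
  sSup ((fun x => ∑ m, c m * x m) '' P)

def HasExtFormOfSize {d : ℕ} (P : Set (Fin d → ℝ)) (m : ℕ) : Prop :=
  ∃ (e m' : ℕ) (A : Matrix (Fin m) (Fin e) ℝ) (b : Fin m → ℝ)
    (C : Matrix (Fin m') (Fin e) ℝ) (d' : Fin m' → ℝ)
    (π : (Fin e → ℝ) →ᵃ[ℝ] (Fin d → ℝ)),
    π '' {y | A.mulVec y ≤ b ∧ C.mulVec y = d'} = P

noncomputable def xc {d : ℕ} (P : Set (Fin d → ℝ)) : ℕ :=
  sInf {m | HasExtFormOfSize P m}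

def MaxoutComputes {d : ℕ} (k s : ℕ) (a : Fin s → Fin k → Fin d → ℝ)
    (w : Fin s → Fin k → Fin s → ℝ) (f : (Fin d → ℝ) → ℝ) : Prop :=
  ∃ (z : Fin s → (Fin d → ℝ) → ℝ) (hs : 0 < s),
    (∀ j x, IsGreatest (Set.range fun i : Fin k =>
        ∑ m, a j i m * x m +
        ∑ l ∈ Finset.univ.filter (fun l => l < j), w j i l * z l x) (z j x)) ∧
    f = z ⟨s - 1, Nat.sub_lt hs Nat.one_pos⟩

def IsMaxoutNetwork {d : ℕ} (k s : ℕ) (f : (Fin d → ℝ) → ℝ) : Prop :=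
  ∃ (a : Fin s → Fin k → Fin d → ℝ) (w : Fin s → Fin k → Fin s → ℝ),
    MaxoutComputes k s a w f

def IsMonotoneMaxoutNetwork {d : ℕ} (k s : ℕ) (f : (Fin d → ℝ) → ℝ) : Prop :=
  ∃ (a : Fin s → Fin k → Fin d → ℝ) (w : Fin s → Fin k → Fin s → ℝ),
    (∀ j i m, 0 ≤ a j i m) ∧ (∀ j i l, 0 ≤ w j i l) ∧ MaxoutComputes k s a w f

def epiSet {d : ℕ} (f : (Fin d → ℝ) → ℝ) : Set (Fin (d + 1) → ℝ) :=
  {p | f (fun m => p m.castSucc) ≤ p (Fin.last d)}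

def argmaxSet {d : ℕ} (c : Fin d → ℝ) (S : Set (Fin d → ℝ)) : Set (Fin d → ℝ) :=
  {x | x ∈ S ∧ ∀ y ∈ S, ∑ m, c m * y m ≤ ∑ m, c m * x m}

def iterFaces {d : ℕ} (c : Fin d → Fin d → ℝ) (S : Set (Fin d → ℝ)) : ℕ → Set (Fin d → ℝ)
  | 0 => S
  | i + 1 => if h : i < d then argmaxSet (c ⟨i, h⟩) (iterFaces c S i) else iterFaces c S i

noncomputable def vxc {d : ℕ} (P : Set (Fin d → ℝ)) : ℕ :=
  sInf {m | ∃ Q R : Set (Fin d → ℝ), IsPolytope Q ∧ IsPolytope R ∧ P + Q = R ∧ m = xc Q + xc R}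

def coneGen {d : ℕ} (S : Set (Fin d → ℝ)) : Set (Fin d → ℝ) :=
  ⋂₀ {K | S ⊆ K ∧ Convex ℝ K ∧ ∀ x ∈ K, ∀ t : ℝ, 0 < t → t • x ∈ K}

def polarCone {d : ℕ} (K : Set (Fin d → ℝ)) : Set (Fin d → ℝ) :=
  {z | ∀ y ∈ K, ∑ i, z i * y i ≤ 0}


open Finset

set_option linter.unusedSectionVars false

section Cone

variable {E : Type*} [NormedAddCommGroup E] [NormedSpace ℝ E] [FiniteDimensional ℝ E]
variable {ι : Type*} [Fintype ι] [DecidableEq ι]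

/-- The cone generated by a finite family. -/
def coneOf (g : ι → E) : Set E :=
  {x | ∃ lam : ι → ℝ, (∀ i, 0 ≤ lam i) ∧ x = ∑ i, lam i • g i}

lemma zero_mem_coneOf (g : ι → E) : (0 : E) ∈ coneOf g :=
  ⟨0, fun _ => le_refl 0, by simp⟩

lemma coneOf_convex (g : ι → E) : Convex ℝ (coneOf g) := by
  rintro x ⟨lx, hlx, rfl⟩ y ⟨ly, hly, rfl⟩ a b ha hb _
  refine ⟨fun i => a * lx i + b * ly i,
    fun i => add_nonneg (mul_nonneg ha (hlx i)) (mul_nonneg hb (hly i)), ?_⟩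
  rw [Finset.smul_sum, Finset.smul_sum, ← Finset.sum_add_distrib]
  refine Finset.sum_congr rfl fun i _ => ?_
  simp [add_smul, mul_smul]

lemma smul_mem_coneOf {g : ι → E} {x : E} (hx : x ∈ coneOf g) {t : ℝ} (ht : 0 ≤ t) :
    t • x ∈ coneOf g := by
  obtain ⟨l, hl, rfl⟩ := hx
  refine ⟨fun i => t * l i, fun i => mul_nonneg ht (hl i), ?_⟩
  rw [Finset.smul_sum]
  exact Finset.sum_congr rfl fun i _ => (mul_smul t (l i) (g i)).symm

lemma sum_extend_zero (g : ι → E) (s : Finset ι) (u : {x // x ∈ s} → ℝ) :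
    ∑ i, (if h : i ∈ s then u ⟨i, h⟩ else 0) • g i = ∑ i : {x // x ∈ s}, u i • g i := by
  have h1 : ∑ i, (if h : i ∈ s then u ⟨i, h⟩ else 0) • g i
      = ∑ i ∈ s, (if h : i ∈ s then u ⟨i, h⟩ else 0) • g i :=
    (Finset.sum_subset (Finset.subset_univ s) (fun i _ hit => by simp [hit])).symm
  rw [h1, ← Finset.sum_coe_sort s (fun i => (if h : i ∈ s then u ⟨i, h⟩ else 0) • g i)]
  exact Finset.sum_congr rfl (fun (i : {x // x ∈ s}) _ => by simp [i.2])

/-- Conic Carathéodory. -/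
lemma carath_aux (g : ι → E) : ∀ (n : ℕ) (lam : ι → ℝ),
    (Finset.univ.filter fun i => lam i ≠ 0).card ≤ n → (∀ i, 0 ≤ lam i) →
    ∃ s : Finset ι, (LinearIndependent ℝ fun i : {x // x ∈ s} => g i) ∧
      ∃ u : {x // x ∈ s} → ℝ, (∀ i, 0 ≤ u i) ∧
        ∑ i, lam i • g i = ∑ i : {x // x ∈ s}, u i • g i := by
  intro n
  induction n with
  | zero =>
    intro lam hcard _
    have ht : (Finset.univ.filter fun i => lam i ≠ 0) = ∅ :=
      Finset.card_eq_zero.mp (Nat.le_zero.mp hcard)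
    have hz : ∀ i, lam i = 0 := by
      intro i
      by_contra h
      have : i ∈ (Finset.univ.filter fun i => lam i ≠ 0) := by simp [h]
      simp [ht] at this
    refine ⟨∅, linearIndependent_empty_type, fun _ => 0, fun _ => le_refl 0, ?_⟩
    simp [hz]
  | succ n ih =>
    intro lam hcard hnn
    set t := (Finset.univ.filter fun i => lam i ≠ 0) with ht
    by_cases hli : LinearIndependent ℝ fun i : {x // x ∈ t} => g i
    · refine ⟨t, hli, fun i => lam i, fun i => hnn i, ?_⟩
      rw [Finset.sum_coe_sort t (fun i => lam i • g i)]
      exact (Finset.sum_subset (Finset.subset_univ t) (fun i _ hit => by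
        have : lam i = 0 := by
          by_contra h
          exact hit (by simp [ht, h])
        simp [this])).symm
    · obtain ⟨gc, hgc0, j₀, hj₀⟩ := Fintype.not_linearIndependent_iff.mp hli
      have key : ∀ cc : ι → ℝ, (∀ i, i ∉ t → cc i = 0) →
          (∑ i, cc i • g i = 0) → (∃ i, 0 < cc i) →
          ∃ s : Finset ι, (LinearIndependent ℝ fun i : {x // x ∈ s} => g i) ∧
          ∃ u : {x // x ∈ s} → ℝ, (∀ i, 0 ≤ u i) ∧
            ∑ i, lam i • g i = ∑ i : {x // x ∈ s}, u i • g i := by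
        rintro cc hccsupp hccsum ⟨jp, hjp⟩
        have hTpos : ((Finset.univ.filter fun i => 0 < cc i)).Nonempty := ⟨jp, by simp [hjp]⟩
        obtain ⟨i₀, hi₀mem, hi₀min⟩ :=
          Finset.exists_min_image _ (fun i => lam i / cc i) hTpos
        have hcc₀ : 0 < cc i₀ := by simpa using hi₀mem
        set ts : ℝ := lam i₀ / cc i₀ with hts
        have hts0 : 0 ≤ ts := div_nonneg (hnn i₀) hcc₀.le
        set lam' : ι → ℝ := fun i => lam i - ts * cc i with hlam'
        have hlam'nn : ∀ i, 0 ≤ lam' i := by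
          intro i
          rcases le_or_gt (cc i) 0 with h | h
          · have h2 : ts * cc i ≤ 0 := mul_nonpos_of_nonneg_of_nonpos hts0 h
            have := hnn i
            simp only [hlam']; linarith
          · have hmin : ts ≤ lam i / cc i := hi₀min i (by simp [h])
            simp only [hlam', sub_nonneg]
            calc ts * cc i ≤ (lam i / cc i) * cc i :=
                  mul_le_mul_of_nonneg_right hmin h.le
              _ = lam i := by field_simp
        have hsum' : ∑ i, lam' i • g i = ∑ i, lam i • g i := by
          simp only [hlam', sub_smul, mul_smul]
          rw [Finset.sum_sub_distrib, ← Finset.smul_sum, hccsum, smul_zero, sub_zero]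
        have hi₀z : lam' i₀ = 0 := by
          simp only [hlam', hts]
          field_simp
          ring
        have hi₀t : i₀ ∈ t := by
          by_contra h
          rw [hccsupp i₀ h] at hcc₀; exact lt_irrefl 0 hcc₀
        have hsupp' : (Finset.univ.filter fun i => lam' i ≠ 0) ⊆ t.erase i₀ := by
          intro i hi
          simp only [Finset.mem_filter, Finset.mem_univ, true_and] at hi
          refine Finset.mem_erase.mpr ⟨?_, ?_⟩
          · rintro rfl; exact hi hi₀z
          · by_contra hit
            have h1 : lam i = 0 := by
              by_contra h
              exact hit (by simp [ht, h])
            have h2 : cc i = 0 := hccsupp i hit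
            exact hi (by simp [hlam', h1, h2])
        have hcard' : (Finset.univ.filter fun i => lam' i ≠ 0).card ≤ n := by
          calc (Finset.univ.filter fun i => lam' i ≠ 0).card ≤ (t.erase i₀).card :=
                Finset.card_le_card hsupp'
            _ = t.card - 1 := Finset.card_erase_of_mem hi₀t
            _ ≤ (n + 1) - 1 := Nat.sub_le_sub_right hcard 1
            _ = n := rfl
        obtain ⟨s, hs, u, hu, hequ⟩ := ih lam' hcard' hlam'nn
        exact ⟨s, hs, u, hu, by rw [← hsum']; exact hequ⟩
      set ccbase : ι → ℝ := fun i => if h : i ∈ t then gc ⟨i, h⟩ else 0 with hccbase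
      have hsupp : ∀ i, i ∉ t → ccbase i = 0 := fun i hi => by simp [hccbase, hi]
      have hsum : ∑ i, ccbase i • g i = 0 := by
        rw [sum_extend_zero g t gc]; exact hgc0
      have hne : ccbase j₀ ≠ 0 := by
        simpa [hccbase, j₀.2] using hj₀
      rcases lt_or_gt_of_ne hne with hneg | hpos
      · refine key (fun i => -ccbase i) (fun i hi => by simp [hsupp i hi]) ?_
          ⟨j₀, by simpa using hneg⟩
        simp only [neg_smul]
        rw [Finset.sum_neg_distrib, hsum, neg_zero]
      · exact key ccbase hsupp hsum ⟨j₀, hpos⟩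

lemma coneOf_isClosed (g : ι → E) : IsClosed (coneOf g) := by
  have hrw : coneOf g = ⋃ s ∈ {s : Finset ι | LinearIndependent ℝ fun i : {x // x ∈ s} => g i},
      (fun u : {x // x ∈ s} → ℝ => ∑ i : {x // x ∈ s}, u i • g i) '' {u | ∀ i, 0 ≤ u i} := by
    ext x
    constructor
    · rintro ⟨lam, hnn, rfl⟩
      obtain ⟨s, hli, u, hu, hequ⟩ := carath_aux g _ lam le_rfl hnn
      exact Set.mem_biUnion hli ⟨u, hu, hequ.symm⟩
    · rintro ⟨S, ⟨s, rfl⟩, hx⟩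
      simp only [Set.mem_iUnion, Set.mem_image] at hx
      obtain ⟨hli, u, hu, rfl⟩ := hx
      refine ⟨fun i => if h : i ∈ s then u ⟨i, h⟩ else 0, fun i => by
        by_cases h : i ∈ s <;> simp [h, hu ⟨i, _⟩], ?_⟩
      · exact (sum_extend_zero g s u).symm
  rw [hrw]
  refine Set.Finite.isClosed_biUnion (Set.toFinite _) ?_
  intro s hs
  have hli : LinearIndependent ℝ fun i : {x // x ∈ s} => g i := hs
  set T : ({x // x ∈ s} → ℝ) →ₗ[ℝ] E :=
    { toFun := fun u => ∑ i : {x // x ∈ s}, u i • g i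
      map_add' := by
        intro u v
        rw [← Finset.sum_add_distrib]
        exact Finset.sum_congr rfl fun i _ => by rw [Pi.add_apply, add_smul]
      map_smul' := by
        intro c u
        rw [Finset.smul_sum]
        simp only [RingHom.id_apply]
        exact Finset.sum_congr rfl fun i _ => by
          rw [Pi.smul_apply, smul_smul, smul_eq_mul] } with hT
  have hinj : LinearMap.ker T = ⊥ := by
    rw [LinearMap.ker_eq_bot']
    intro u hu
    exact funext (Fintype.linearIndependent_iff.mp hli u hu)
  have hce := LinearMap.isClosedEmbedding_of_injective hinj
  have horth : IsClosed {u : {x // x ∈ s} → ℝ | ∀ i, 0 ≤ u i} := by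
    have : {u : {x // x ∈ s} → ℝ | ∀ i, 0 ≤ u i} = ⋂ i, {u | 0 ≤ u i} := by
      ext u; simp [Set.mem_iInter]
    rw [this]
    exact isClosed_iInter fun i => isClosed_le continuous_const (continuous_apply i)
  exact hce.isClosedMap _ horth

/-- Separation of a point from a finitely generated cone. -/
lemma coneOf_separation {g : ι → E} {x : E} (hx : x ∉ coneOf g) :
    ∃ f : E →L[ℝ] ℝ, (∀ i, f (g i) ≤ 0) ∧ 0 < f x := by
  obtain ⟨f, u, hfK, hfx⟩ :=
    geometric_hahn_banach_closed_point (coneOf_convex g) (coneOf_isClosed g) hx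
  have hu0 : 0 < u := by
    have := hfK 0 (zero_mem_coneOf g)
    simpa using this
  refine ⟨f, ?_, lt_trans hu0 hfx⟩
  intro i
  by_contra h
  push_neg at h
  have hgi : g i ∈ coneOf g := ⟨fun j => if j = i then 1 else 0, fun j => by positivity, by
    simp [Finset.sum_ite_eq']⟩
  have h1 := hfK (((u + 1) / f (g i)) • g i) (smul_mem_coneOf hgi (by positivity))
  rw [map_smul] at h1
  simp only [smul_eq_mul] at h1
  rw [div_mul_cancel₀ _ (ne_of_gt h)] at h1
  linarith

end Cone


open Finset Matrix

section Farkas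

variable {e : ℕ} {ι : Type*} [Fintype ι] [DecidableEq ι]

lemma pi_clm_repr (φ : (Fin e → ℝ) →L[ℝ] ℝ) (w : Fin e → ℝ) :
    φ w = w ⬝ᵥ fun j => φ (Pi.single j 1) := by
  conv_lhs => rw [← Finset.univ_sum_single w]
  rw [map_sum, dotProduct]
  refine Finset.sum_congr rfl fun j _ => ?_
  have h : Pi.single j (w j) = w j • (Pi.single j 1 : Fin e → ℝ) := by
    rw [← Pi.single_smul, smul_eq_mul, mul_one]
  rw [h, _root_.map_smul, smul_eq_mul]

lemma prod_clm_decomp (f : ((Fin e → ℝ) × ℝ) →L[ℝ] ℝ) (w : Fin e → ℝ) (t : ℝ) :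
    f (w, t) = w ⬝ᵥ (fun j => f (Pi.single j 1, 0)) + t * f (0, 1) := by
  have h1 : (w, t) = ((w, (0:ℝ)) + t • ((0 : Fin e → ℝ), (1:ℝ))) := by
    simp [Prod.ext_iff]
  rw [h1, map_add, _root_.map_smul, smul_eq_mul]
  congr 1
  have h2 : ((w, (0:ℝ)) : (Fin e → ℝ) × ℝ) = (ContinuousLinearMap.inl ℝ (Fin e → ℝ) ℝ) w := by
    simp
  rw [h2, ← ContinuousLinearMap.comp_apply,
    pi_clm_repr (f.comp (ContinuousLinearMap.inl ℝ (Fin e → ℝ) ℝ)) w]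
  refine Finset.sum_congr rfl fun j _ => by simp

lemma dot_sum_smul (lam : ι → ℝ) (B : ι → Fin e → ℝ) (z : Fin e → ℝ) :
    (∑ i, lam i • B i) ⬝ᵥ z = ∑ i, lam i * (B i ⬝ᵥ z) := by
  rw [dotProduct]
  simp only [Finset.sum_apply, Pi.smul_apply, smul_eq_mul, Finset.sum_mul]
  rw [Finset.sum_comm]
  refine Finset.sum_congr rfl fun i _ => ?_
  rw [dotProduct, Finset.mul_sum]
  exact Finset.sum_congr rfl fun j _ => (mul_assoc _ _ _)

/-- Farkas lemma with attainment (strong LP duality at an attained optimum). -/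
lemma farkas_attained (B : ι → Fin e → ℝ) (β : ι → ℝ) (c : Fin e → ℝ) (v : ℝ)
    (y₀ : Fin e → ℝ) (hfeas : ∀ i, B i ⬝ᵥ y₀ ≤ β i)
    (hvalid : ∀ y, (∀ i, B i ⬝ᵥ y ≤ β i) → c ⬝ᵥ y ≤ v)
    (hatt : c ⬝ᵥ y₀ = v) :
    ∃ lam : ι → ℝ, (∀ i, 0 ≤ lam i) ∧ (∀ j, ∑ i, lam i * B i j = c j) ∧
      ∑ i, lam i * β i = v := by
  classical
  set gens : ι ⊕ Unit → (Fin e → ℝ) × ℝ :=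
    Sum.elim (fun i => (B i, β i)) (fun _ => (0, 1)) with hgens
  by_cases hmem : ((c, v) : (Fin e → ℝ) × ℝ) ∈ coneOf gens
  · obtain ⟨Λ, hΛ, heq⟩ := hmem
    set lam : ι → ℝ := fun i => Λ (Sum.inl i) with hlam
    set s : ℝ := Λ (Sum.inr ()) with hs
    rw [Prod.ext_iff] at heq
    obtain ⟨h1, h2⟩ := heq
    have hc : c = ∑ i, lam i • B i := by
      have h1' : c = (∑ i, Λ i • gens i).1 := h1
      rw [h1', Prod.fst_sum, Fintype.sum_sum_type]
      simp [hgens, Prod.smul_fst, hlam]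
    have hv : v = ∑ i, lam i * β i + s := by
      have h2' : v = (∑ i, Λ i • gens i).2 := h2
      rw [h2', Prod.snd_sum, Fintype.sum_sum_type]
      simp [hgens, Prod.smul_snd, hs, smul_eq_mul, hlam]
    have hs0 : 0 ≤ s := hΛ (Sum.inr ())
    have hwd : v ≤ ∑ i, lam i * β i := by
      calc v = c ⬝ᵥ y₀ := hatt.symm
        _ = ∑ i, lam i * (B i ⬝ᵥ y₀) := by rw [hc, dot_sum_smul]
        _ ≤ ∑ i, lam i * β i :=
            Finset.sum_le_sum fun i _ => mul_le_mul_of_nonneg_left (hfeas i) (hΛ (Sum.inl i))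
    have hsz : s = 0 := by linarith
    refine ⟨lam, fun i => hΛ (Sum.inl i), fun j => ?_, by rw [hv, hsz, add_zero]⟩
    have := congrFun hc j
    simp only [Finset.sum_apply, Pi.smul_apply, smul_eq_mul] at this
    exact this.symm
  · obtain ⟨f, hfg, hfx⟩ := coneOf_separation hmem
    set y : Fin e → ℝ := fun j => f (Pi.single j 1, 0) with hy
    set τ : ℝ := f (0, 1) with hτ
    have hrows : ∀ i, B i ⬝ᵥ y + β i * τ ≤ 0 := fun i => by
      have := hfg (Sum.inl i)
      rwa [hgens, Sum.elim_inl, prod_clm_decomp] at this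
    have hτ0 : τ ≤ 0 := by
      have := hfg (Sum.inr ())
      rw [hgens, Sum.elim_inr, prod_clm_decomp] at this
      simpa using this
    have hcv : 0 < c ⬝ᵥ y + v * τ := by
      have := hfx
      rwa [prod_clm_decomp] at this
    rcases lt_or_eq_of_le hτ0 with hτneg | hτz
    · exfalso
      have hpos : 0 < -τ := by linarith
      set y' : Fin e → ℝ := (-τ)⁻¹ • y with hy'
      have hfeas' : ∀ i, B i ⬝ᵥ y' ≤ β i := by
        intro i
        rw [hy', dotProduct_smul, smul_eq_mul]
        have h2 : B i ⬝ᵥ y ≤ β i * (-τ) := by nlinarith [hrows i]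
        calc (-τ)⁻¹ * (B i ⬝ᵥ y) ≤ (-τ)⁻¹ * (β i * (-τ)) :=
              mul_le_mul_of_nonneg_left h2 (by positivity)
          _ = β i := by
              rw [mul_comm (β i), inv_mul_cancel_left₀ (by linarith : (-τ) ≠ 0)]
      have hobj : v < c ⬝ᵥ y' := by
        rw [hy', dotProduct_smul, smul_eq_mul]
        have h3 : v * (-τ) < c ⬝ᵥ y := by nlinarith
        calc v = (-τ)⁻¹ * (v * (-τ)) := by
              rw [mul_comm v, inv_mul_cancel_left₀ (by linarith : (-τ) ≠ 0)]
          _ < (-τ)⁻¹ * (c ⬝ᵥ y) := by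
              exact mul_lt_mul_of_pos_left h3 (by positivity)
      exact absurd (hvalid y' hfeas') (not_le.mpr hobj)
    · exfalso
      rw [hτz] at hrows hcv
      simp only [mul_zero, add_zero] at hrows hcv
      have hfeas2 : ∀ i, B i ⬝ᵥ (y₀ + y) ≤ β i := by
        intro i
        rw [dotProduct_add]
        linarith [hfeas i, hrows i]
      have := hvalid (y₀ + y) hfeas2
      rw [dotProduct_add, hatt] at this
      linarith

/-- Farkas infeasibility certificate. -/
lemma farkas_infeasible (B : ι → Fin e → ℝ) (β : ι → ℝ)
    (hinf : ¬ ∃ y, ∀ i, B i ⬝ᵥ y ≤ β i) :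
    ∃ lam : ι → ℝ, (∀ i, 0 ≤ lam i) ∧ (∀ j, ∑ i, lam i * B i j = 0) ∧
      ∑ i, lam i * β i = -1 := by
  classical
  set gens : ι → (Fin e → ℝ) × ℝ := fun i => (B i, β i) with hgens
  by_cases hmem : ((0, -1) : (Fin e → ℝ) × ℝ) ∈ coneOf gens
  · obtain ⟨lam, hlam, heq⟩ := hmem
    rw [Prod.ext_iff] at heq
    obtain ⟨h1, h2⟩ := heq
    refine ⟨lam, hlam, fun j => ?_, ?_⟩
    · have h1' : (0 : Fin e → ℝ) = (∑ i, lam i • gens i).1 := h1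
      have := congrFun h1' j
      simp only [Prod.fst_sum, Finset.sum_apply, Pi.smul_apply, smul_eq_mul,
        Pi.zero_apply, Prod.smul_fst, hgens] at this
      exact this.symm
    · have h2' : (-1 : ℝ) = (∑ i, lam i • gens i).2 := h2
      simp only [Prod.snd_sum, Prod.smul_snd, smul_eq_mul, hgens] at h2'
      exact h2'.symm
  · exfalso
    obtain ⟨f, hfg, hfx⟩ := coneOf_separation hmem
    set y : Fin e → ℝ := fun j => f (Pi.single j 1, 0) with hy
    set τ : ℝ := f (0, 1) with hτ
    have hrows : ∀ i, B i ⬝ᵥ y + β i * τ ≤ 0 := fun i => by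
      have := hfg i
      rwa [hgens, prod_clm_decomp] at this
    have hτneg : τ < 0 := by
      have := hfx
      rw [prod_clm_decomp] at this
      simp only [zero_dotProduct] at this
      linarith
    have hpos : 0 < -τ := by linarith
    refine hinf ⟨(-τ)⁻¹ • y, fun i => ?_⟩
    rw [dotProduct_smul, smul_eq_mul]
    have h2 : B i ⬝ᵥ y ≤ β i * (-τ) := by nlinarith [hrows i]
    calc (-τ)⁻¹ * (B i ⬝ᵥ y) ≤ (-τ)⁻¹ * (β i * (-τ)) :=
          mul_le_mul_of_nonneg_left h2 (by positivity)
      _ = β i := by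
          rw [mul_comm (β i), inv_mul_cancel_left₀ (by linarith : (-τ) ≠ 0)]

end Farkas

section SuppFn

open Matrix

variable {d : ℕ} {P : Set (Fin d → ℝ)}

lemma polytope_compact (hP : IsPolytope P) : IsCompact P := by
  obtain ⟨V, _, rfl⟩ := hP
  exact (Set.Finite.isCompact_convexHull ℝ (V.finite_toSet))

lemma polytope_convex (hP : IsPolytope P) : Convex ℝ P := by
  obtain ⟨V, _, rfl⟩ := hP
  exact convex_convexHull ℝ _

lemma polytope_nonempty (hP : IsPolytope P) : P.Nonempty := by
  obtain ⟨V, hV, rfl⟩ := hP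
  exact Set.Nonempty.mono (subset_convexHull ℝ _) (by exact_mod_cast hV.to_set)

lemma dot_continuous (c : Fin d → ℝ) : Continuous fun x : Fin d → ℝ => ∑ m, c m * x m := by
  exact continuous_finset_sum _ fun m _ => (continuous_const.mul (continuous_apply m))

lemma suppFn_isGreatest (hP : IsPolytope P) (c : Fin d → ℝ) :
    IsGreatest ((fun x => ∑ m, c m * x m) '' P) (suppFn P c) := by
  have himg : IsCompact ((fun x => ∑ m, c m * x m) '' P) :=
    (polytope_compact hP).image (dot_continuous c)
  have hne : ((fun x => ∑ m, c m * x m) '' P).Nonempty :=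
    (polytope_nonempty hP).image _
  exact ⟨himg.sSup_mem hne, fun y hy => le_csSup himg.bddAbove hy⟩

lemma suppFn_le (hP : IsPolytope P) (c : Fin d → ℝ) {x : Fin d → ℝ} (hx : x ∈ P) :
    ∑ m, c m * x m ≤ suppFn P c :=
  (suppFn_isGreatest hP c).2 ⟨x, hx, rfl⟩

lemma suppFn_exists_max (hP : IsPolytope P) (c : Fin d → ℝ) :
    ∃ x ∈ P, (∑ m, c m * x m) = suppFn P c := by
  obtain ⟨x, hx, hxe⟩ := (suppFn_isGreatest hP c).1
  exact ⟨x, hx, hxe⟩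

lemma suppFn_zero (hP : IsPolytope P) : suppFn P 0 = 0 := by
  obtain ⟨x, hx, he⟩ := suppFn_exists_max hP 0
  rw [← he]
  simp

lemma mem_polytope_iff (hP : IsPolytope P) (x : Fin d → ℝ) :
    x ∈ P ↔ ∀ c : Fin d → ℝ, ∑ m, c m * x m ≤ suppFn P c := by
  constructor
  · exact fun hx c => suppFn_le hP c hx
  · intro h
    by_contra hx
    obtain ⟨f, u, hfP, hfx⟩ := geometric_hahn_banach_closed_point
      (polytope_convex hP) (polytope_compact hP).isClosed hx
    set c : Fin d → ℝ := fun m => f (Pi.single m 1) with hc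
    have hrep : ∀ w : Fin d → ℝ, f w = ∑ m, c m * w m := by
      intro w
      rw [pi_clm_repr f w, dotProduct]
      exact Finset.sum_congr rfl fun m _ => mul_comm _ _
    have hub : suppFn P c ≤ u := by
      refine csSup_le ((polytope_nonempty hP).image _) ?_
      rintro y ⟨a, ha, rfl⟩
      show ∑ m, c m * a m ≤ u
      rw [show ∑ m, c m * a m = f a from (hrep a).symm]
      exact (hfP a ha).le
    have := h c
    rw [show ∑ m, c m * x m = f x from (hrep x).symm] at this
    linarith

lemma polytope_norm_bound (hP : IsPolytope P) : ∃ R : ℝ, ∀ x ∈ P, ‖x‖ ≤ R := by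
  obtain ⟨r, hr⟩ := ((polytope_compact hP).isBounded).subset_closedBall 0
  exact ⟨r, fun x hx => by simpa using hr hx⟩

end SuppFn

section Transport

open Matrix

lemma hasExtFormOfSize_of_index {d m : ℕ} {κ κ' : Type} [Fintype κ] [Fintype κ']
    (P : Set (Fin d → ℝ)) (A : Fin m → κ → ℝ) (b : Fin m → ℝ) (C : κ' → κ → ℝ)
    (dd : κ' → ℝ) (π : (κ → ℝ) →ᵃ[ℝ] (Fin d → ℝ))
    (h : π '' {y : κ → ℝ | (∀ i, A i ⬝ᵥ y ≤ b i) ∧ (∀ k, C k ⬝ᵥ y = dd k)} = P) :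
    HasExtFormOfSize P m := by
  classical
  set e := Fintype.card κ with he
  set m'' := Fintype.card κ' with hm''
  set eκ : Fin e ≃ κ := (Fintype.equivFin κ).symm with heκ
  set eκ' : Fin m'' ≃ κ' := (Fintype.equivFin κ').symm with heκ'
  set A' : Matrix (Fin m) (Fin e) ℝ := Matrix.of fun i j => A i (eκ j) with hA'
  set C' : Matrix (Fin m'') (Fin e) ℝ := Matrix.of fun k j => C (eκ' k) (eκ j) with hC'
  set dd' : Fin m'' → ℝ := fun k => dd (eκ' k) with hdd'
  set Lre : (Fin e → ℝ) →ₗ[ℝ] (κ → ℝ) := LinearMap.funLeft ℝ ℝ eκ.symm with hLre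
  refine ⟨e, m'', A', b, C', dd', π.comp Lre.toAffineMap, ?_⟩
  rw [← h]
  have hdot : ∀ (w : κ → ℝ) (z : Fin e → ℝ), (fun j => w (eκ j)) ⬝ᵥ z = w ⬝ᵥ Lre z := by
    intro w z
    rw [dotProduct, dotProduct]
    refine Fintype.sum_equiv eκ _ _ fun j => ?_
    simp [hLre, LinearMap.funLeft]
  ext u
  constructor
  · rintro ⟨z, ⟨hz1, hz2⟩, rfl⟩
    refine ⟨Lre z, ⟨fun i => ?_, fun k => ?_⟩, rfl⟩
    · have := hz1 i
      rwa [show A'.mulVec z i = A i ⬝ᵥ Lre z from by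
        rw [Matrix.mulVec]; exact hdot (A i) z] at this
    · have := congrFun hz2 (eκ'.symm k)
      rw [show C'.mulVec z (eκ'.symm k) = C (eκ' (eκ'.symm k)) ⬝ᵥ Lre z from by
        rw [Matrix.mulVec]; exact hdot _ z] at this
      simpa [hdd'] using this
  · rintro ⟨y, ⟨hy1, hy2⟩, rfl⟩
    refine ⟨fun j => y (eκ j), ⟨?_, ?_⟩, ?_⟩
    · intro i
      have hLy : Lre (fun j => y (eκ j)) = y := by
        funext k
        simp [hLre, LinearMap.funLeft]
      rw [show A'.mulVec (fun j => y (eκ j)) i = A i ⬝ᵥ Lre (fun j => y (eκ j)) from by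
        rw [Matrix.mulVec]; exact hdot (A i) _, hLy]
      exact hy1 i
    · funext k
      have hLy : Lre (fun j => y (eκ j)) = y := by
        funext k'
        simp [hLre, LinearMap.funLeft]
      rw [show C'.mulVec (fun j => y (eκ j)) k = C (eκ' k) ⬝ᵥ Lre (fun j => y (eκ j)) from by
        rw [Matrix.mulVec]; exact hdot _ _, hLy]
      exact hy2 (eκ' k)
    · have hLy : Lre (fun j => y (eκ j)) = y := by
        funext k'
        simp [hLre, LinearMap.funLeft]
      show π (Lre fun j => y (eκ j)) = π y
      rw [hLy]

/-- the converse: from a `Fin`-indexed form to the general shape -/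
lemma extForm_to_index {d m : ℕ} (P : Set (Fin d → ℝ)) (h : HasExtFormOfSize P m) :
    ∃ (e m' : ℕ) (A : Fin m → (Fin e → ℝ)) (b : Fin m → ℝ) (C : Fin m' → (Fin e → ℝ))
      (dd : Fin m' → ℝ) (π : (Fin e → ℝ) →ᵃ[ℝ] (Fin d → ℝ)),
      π '' {y : Fin e → ℝ | (∀ i, A i ⬝ᵥ y ≤ b i) ∧ (∀ k, C k ⬝ᵥ y = dd k)} = P := by
  obtain ⟨e, m', A, b, C, dd, π, h⟩ := h
  refine ⟨e, m', fun i => A i, b, fun k => C k, dd, π, ?_⟩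
  rw [← h]
  have hset : {y : Fin e → ℝ | (∀ i, (fun i => A i) i ⬝ᵥ y ≤ b i) ∧
      (∀ k, (fun k => C k) k ⬝ᵥ y = dd k)} = {y | A.mulVec y ≤ b ∧ C.mulVec y = dd} := by
    ext y
    constructor
    · rintro ⟨h1, h2⟩
      exact ⟨fun i => h1 i, funext fun k => h2 k⟩
    · rintro ⟨h1, h2⟩
      exact ⟨fun i => h1 i, fun k => congrFun h2 k⟩
  rw [hset]

end Transport

section Systems

open Matrix

variable {e m m' : ℕ}

lemma farkas_system_attained (A : Fin m → (Fin e → ℝ)) (b : Fin m → ℝ)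
    (C : Fin m' → (Fin e → ℝ)) (dd : Fin m' → ℝ) (c : Fin e → ℝ) (v : ℝ)
    (y₀ : Fin e → ℝ) (hfeas : (∀ i, A i ⬝ᵥ y₀ ≤ b i) ∧ (∀ k, C k ⬝ᵥ y₀ = dd k))
    (hvalid : ∀ y, (∀ i, A i ⬝ᵥ y ≤ b i) → (∀ k, C k ⬝ᵥ y = dd k) → c ⬝ᵥ y ≤ v)
    (hatt : c ⬝ᵥ y₀ = v) :
    ∃ (lam : Fin m → ℝ) (mu : Fin m' → ℝ), (∀ i, 0 ≤ lam i) ∧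
      (∀ j, ∑ i, lam i * A i j + ∑ k, mu k * C k j = c j) ∧
      (∑ i, lam i * b i + ∑ k, mu k * dd k = v) := by
  classical
  set Bf : (Fin m ⊕ (Fin m' ⊕ Fin m')) → (Fin e → ℝ) :=
    Sum.elim A (Sum.elim C fun k => -(C k)) with hBf
  set βf : (Fin m ⊕ (Fin m' ⊕ Fin m')) → ℝ :=
    Sum.elim b (Sum.elim dd fun k => -(dd k)) with hβf
  have hfold : ∀ y, (∀ i, Bf i ⬝ᵥ y ≤ βf i) ↔
      ((∀ i, A i ⬝ᵥ y ≤ b i) ∧ (∀ k, C k ⬝ᵥ y = dd k)) := by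
    intro y
    constructor
    · intro hy
      refine ⟨fun i => hy (Sum.inl i), fun k => le_antisymm (hy (Sum.inr (Sum.inl k))) ?_⟩
      have := hy (Sum.inr (Sum.inr k))
      simp only [hBf, hβf, Sum.elim_inr, neg_dotProduct] at this
      linarith
    · rintro ⟨h1, h2⟩ i
      rcases i with i | k | k
      · exact h1 i
      · exact le_of_eq (h2 k)
      · simp only [hBf, hβf, Sum.elim_inr, neg_dotProduct]
        linarith [h2 k]
  obtain ⟨Λ, hΛ, hcomp, hval⟩ := farkas_attained Bf βf c v y₀
    ((hfold y₀).mpr hfeas) (fun y hy => hvalid y ((hfold y).mp hy).1 ((hfold y).mp hy).2) hatt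
  refine ⟨fun i => Λ (Sum.inl i),
    fun k => Λ (Sum.inr (Sum.inl k)) - Λ (Sum.inr (Sum.inr k)),
    fun i => hΛ (Sum.inl i), fun j => ?_, ?_⟩
  · have hthis := hcomp j
    rw [Fintype.sum_sum_type, Fintype.sum_sum_type] at hthis
    simp only [hBf, Sum.elim_inl, Sum.elim_inr, Pi.neg_apply, mul_neg] at hthis
    show ∑ i : Fin m, Λ (Sum.inl i) * A i j +
      ∑ k : Fin m', (Λ (Sum.inr (Sum.inl k)) - Λ (Sum.inr (Sum.inr k))) * C k j = _
    have h2 : ∑ k : Fin m', (Λ (Sum.inr (Sum.inl k)) - Λ (Sum.inr (Sum.inr k))) * C k j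
        = ∑ x : Fin m', Λ (Sum.inr (Sum.inl x)) * C x j
          + ∑ x : Fin m', -(Λ (Sum.inr (Sum.inr x)) * C x j) := by
      rw [← Finset.sum_add_distrib]
      exact Finset.sum_congr rfl fun k _ => by ring
    rw [h2]
    exact hthis
  · have hthis := hval
    rw [Fintype.sum_sum_type, Fintype.sum_sum_type] at hthis
    simp only [hBf, hβf, Sum.elim_inl, Sum.elim_inr, mul_neg] at hthis
    show ∑ i : Fin m, Λ (Sum.inl i) * b i +
      ∑ k : Fin m', (Λ (Sum.inr (Sum.inl k)) - Λ (Sum.inr (Sum.inr k))) * dd k = _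
    have h2 : ∑ k : Fin m', (Λ (Sum.inr (Sum.inl k)) - Λ (Sum.inr (Sum.inr k))) * dd k
        = ∑ x : Fin m', Λ (Sum.inr (Sum.inl x)) * dd x
          + ∑ x : Fin m', -(Λ (Sum.inr (Sum.inr x)) * dd x) := by
      rw [← Finset.sum_add_distrib]
      exact Finset.sum_congr rfl fun k _ => by ring
    rw [h2]
    exact hthis

lemma farkas_system_infeasible (A : Fin m → (Fin e → ℝ)) (b : Fin m → ℝ)
    (C : Fin m' → (Fin e → ℝ)) (dd : Fin m' → ℝ)
    (hinf : ¬ ∃ y, (∀ i, A i ⬝ᵥ y ≤ b i) ∧ (∀ k, C k ⬝ᵥ y = dd k)) :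
    ∃ (lam : Fin m → ℝ) (mu : Fin m' → ℝ), (∀ i, 0 ≤ lam i) ∧
      (∀ j, ∑ i, lam i * A i j + ∑ k, mu k * C k j = 0) ∧
      (∑ i, lam i * b i + ∑ k, mu k * dd k = -1) := by
  classical
  set Bf : (Fin m ⊕ (Fin m' ⊕ Fin m')) → (Fin e → ℝ) :=
    Sum.elim A (Sum.elim C fun k => -(C k)) with hBf
  set βf : (Fin m ⊕ (Fin m' ⊕ Fin m')) → ℝ :=
    Sum.elim b (Sum.elim dd fun k => -(dd k)) with hβf
  have hfold : ∀ y, (∀ i, Bf i ⬝ᵥ y ≤ βf i) ↔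
      ((∀ i, A i ⬝ᵥ y ≤ b i) ∧ (∀ k, C k ⬝ᵥ y = dd k)) := by
    intro y
    constructor
    · intro hy
      refine ⟨fun i => hy (Sum.inl i), fun k => le_antisymm (hy (Sum.inr (Sum.inl k))) ?_⟩
      have := hy (Sum.inr (Sum.inr k))
      simp only [hBf, hβf, Sum.elim_inr, neg_dotProduct] at this
      linarith
    · rintro ⟨h1, h2⟩ i
      rcases i with i | k | k
      · exact h1 i
      · exact le_of_eq (h2 k)
      · simp only [hBf, hβf, Sum.elim_inr, neg_dotProduct]
        linarith [h2 k]
  obtain ⟨Λ, hΛ, hcomp, hval⟩ := farkas_infeasible Bf βf (by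
    intro ⟨y, hy⟩
    exact hinf ⟨y, (hfold y).mp hy⟩)
  refine ⟨fun i => Λ (Sum.inl i),
    fun k => Λ (Sum.inr (Sum.inl k)) - Λ (Sum.inr (Sum.inr k)),
    fun i => hΛ (Sum.inl i), fun j => ?_, ?_⟩
  · have hthis := hcomp j
    rw [Fintype.sum_sum_type, Fintype.sum_sum_type] at hthis
    simp only [hBf, Sum.elim_inl, Sum.elim_inr, Pi.neg_apply, mul_neg] at hthis
    show ∑ i : Fin m, Λ (Sum.inl i) * A i j +
      ∑ k : Fin m', (Λ (Sum.inr (Sum.inl k)) - Λ (Sum.inr (Sum.inr k))) * C k j = _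
    have h2 : ∑ k : Fin m', (Λ (Sum.inr (Sum.inl k)) - Λ (Sum.inr (Sum.inr k))) * C k j
        = ∑ x : Fin m', Λ (Sum.inr (Sum.inl x)) * C x j
          + ∑ x : Fin m', -(Λ (Sum.inr (Sum.inr x)) * C x j) := by
      rw [← Finset.sum_add_distrib]
      exact Finset.sum_congr rfl fun k _ => by ring
    rw [h2]
    exact hthis
  · have hthis := hval
    rw [Fintype.sum_sum_type, Fintype.sum_sum_type] at hthis
    simp only [hBf, hβf, Sum.elim_inl, Sum.elim_inr, mul_neg] at hthis
    show ∑ i : Fin m, Λ (Sum.inl i) * b i +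
      ∑ k : Fin m', (Λ (Sum.inr (Sum.inl k)) - Λ (Sum.inr (Sum.inr k))) * dd k = _
    have h2 : ∑ k : Fin m', (Λ (Sum.inr (Sum.inl k)) - Λ (Sum.inr (Sum.inr k))) * dd k
        = ∑ x : Fin m', Λ (Sum.inr (Sum.inl x)) * dd x
          + ∑ x : Fin m', -(Λ (Sum.inr (Sum.inr x)) * dd x) := by
      rw [← Finset.sum_add_distrib]
      exact Finset.sum_congr rfl fun k _ => by ring
    rw [h2]
    exact hthis

/-- pairing identity -/
lemma dual_pairing (A : Fin m → (Fin e → ℝ)) (C : Fin m' → (Fin e → ℝ))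
    (lam : Fin m → ℝ) (mu : Fin m' → ℝ) (cv : Fin e → ℝ)
    (heq : ∀ j, ∑ i, lam i * A i j + ∑ k, mu k * C k j = cv j) (y : Fin e → ℝ) :
    cv ⬝ᵥ y = ∑ i, lam i * (A i ⬝ᵥ y) + ∑ k, mu k * (C k ⬝ᵥ y) := by
  rw [dotProduct]
  calc ∑ j, cv j * y j
      = ∑ j, (∑ i, lam i * A i j + ∑ k, mu k * C k j) * y j :=
        Finset.sum_congr rfl fun j _ => by rw [heq j]
    _ = ∑ j, ∑ i, lam i * A i j * y j + ∑ j, ∑ k, mu k * C k j * y j := by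
        simp only [add_mul, Finset.sum_mul, Finset.sum_add_distrib]
    _ = ∑ i, lam i * (A i ⬝ᵥ y) + ∑ k, mu k * (C k ⬝ᵥ y) := by
        rw [Finset.sum_comm (γ := Fin e), Finset.sum_comm (γ := Fin e)]
        congr 1
        · exact Finset.sum_congr rfl fun i _ => by
            rw [dotProduct, Finset.mul_sum]
            exact Finset.sum_congr rfl fun j _ => by ring
        · exact Finset.sum_congr rfl fun k _ => by
            rw [dotProduct, Finset.mul_sum]
            exact Finset.sum_congr rfl fun j _ => by ring

lemma dual_bound (A : Fin m → (Fin e → ℝ)) (b : Fin m → ℝ) (C : Fin m' → (Fin e → ℝ))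
    (dd : Fin m' → ℝ) (lam : Fin m → ℝ) (mu : Fin m' → ℝ) (cv : Fin e → ℝ)
    (hlam : ∀ i, 0 ≤ lam i)
    (heq : ∀ j, ∑ i, lam i * A i j + ∑ k, mu k * C k j = cv j) (y : Fin e → ℝ)
    (hy1 : ∀ i, A i ⬝ᵥ y ≤ b i) (hy2 : ∀ k, C k ⬝ᵥ y = dd k) :
    cv ⬝ᵥ y ≤ ∑ i, lam i * b i + ∑ k, mu k * dd k := by
  rw [dual_pairing A C lam mu cv heq y]
  refine add_le_add (Finset.sum_le_sum fun i _ =>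
    mul_le_mul_of_nonneg_left (hy1 i) (hlam i)) (le_of_eq ?_)
  exact Finset.sum_congr rfl fun k _ => by rw [hy2 k]

/-- coordinates of a linear map on a pi type -/
lemma lin_coord {D : ℕ} (L : (Fin e → ℝ) →ₗ[ℝ] (Fin D → ℝ)) (y : Fin e → ℝ) (r : Fin D) :
    L y r = (fun j => L (fun j' => if j = j' then 1 else 0) r) ⬝ᵥ y := by
  conv_lhs => rw [LinearMap.pi_apply_eq_sum_univ L y]
  rw [Finset.sum_apply, dotProduct]
  exact Finset.sum_congr rfl fun j _ => by simp [mul_comm]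

lemma aff_decomp {D : ℕ} (π : (Fin e → ℝ) →ᵃ[ℝ] (Fin D → ℝ)) (y : Fin e → ℝ) :
    π y = π.linear y + π 0 := by
  have := π.map_vadd 0 y
  simpa using this

end Systems

section Main1

open Matrix

lemma sum_mul_dot {d e : ℕ} (c : Fin d → ℝ) (N : Fin d → Fin e → ℝ) (y : Fin e → ℝ) :
    (fun j => ∑ l, c l * N l j) ⬝ᵥ y = ∑ l, c l * (N l ⬝ᵥ y) := by
  rw [dotProduct]
  simp only [Finset.sum_mul]
  rw [Finset.sum_comm]
  exact Finset.sum_congr rfl fun l _ => by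
    rw [dotProduct, Finset.mul_sum]
    exact Finset.sum_congr rfl fun j _ => by ring

lemma main1 {d : ℕ} {P : Set (Fin d → ℝ)} (hP : IsPolytope P)
    (hdim : ∃ x ∈ P, ∃ y ∈ P, x ≠ y) {m : ℕ} (h : HasExtFormOfSize P m) :
    HasExtFormOfSize (epiSet (suppFn P)) m := by
  classical
  obtain ⟨e, m', A, b, C, dd, π, himg⟩ := extForm_to_index P h
  set L := π.linear with hL
  set p : Fin d → ℝ := π 0 with hp
  set N : Fin d → Fin e → ℝ := fun r j => L (fun j' => if j = j' then 1 else 0) r with hN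
  have hcoord : ∀ (y : Fin e → ℝ) (r : Fin d), π y r = N r ⬝ᵥ y + p r := by
    intro y r
    rw [aff_decomp π y, Pi.add_apply]
    congr 1
    exact lin_coord L y r
  have hdotc : ∀ (c : Fin d → ℝ) (y : Fin e → ℝ),
      ∑ l, c l * π y l = (fun j => ∑ l, c l * N l j) ⬝ᵥ y + ∑ l, c l * p l := by
    intro c y
    rw [sum_mul_dot]
    rw [← Finset.sum_add_distrib]
    refine Finset.sum_congr rfl fun l _ => ?_
    rw [hcoord y l]
    ring
  -- the padding certificate
  have hpad : ∃ (lamb : Fin m → ℝ) (mub : Fin m' → ℝ), (∀ i, 0 ≤ lamb i) ∧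
      (∀ j, ∑ i, lamb i * A i j + ∑ k, mub k * C k j = 0) ∧
      (∑ i, lamb i * b i + ∑ k, mub k * dd k = 1) := by
    have hinf : ¬ ∃ y, (∀ i, (fun i => -(A i)) i ⬝ᵥ y ≤ (fun i => -(b i)) i) ∧
        (∀ k, C k ⬝ᵥ y = dd k) := by
      rintro ⟨ys, hys1, hys2⟩
      obtain ⟨R, hR⟩ := polytope_norm_bound hP
      have hR0 : 0 ≤ R := by
        obtain ⟨x₀, hx₀⟩ := polytope_nonempty hP
        exact le_trans (norm_nonneg x₀) (hR x₀ hx₀)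
      have hconst : ∀ y₀, y₀ ∈ {y : Fin e → ℝ | (∀ i, A i ⬝ᵥ y ≤ b i) ∧
          (∀ k, C k ⬝ᵥ y = dd k)} → π y₀ = π ys := by
        intro y₀ hy₀
        set w : Fin e → ℝ := ys - y₀ with hw
        have hAw : ∀ i, 0 ≤ A i ⬝ᵥ w := by
          intro i
          rw [hw, dotProduct_sub]
          have h2 := hys1 i
          simp only [neg_dotProduct] at h2
          have h1 := hy₀.1 i
          linarith
        have hCw : ∀ k, C k ⬝ᵥ w = 0 := by
          intro k
          rw [hw, dotProduct_sub, hy₀.2 k, hys2 k, sub_self]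
        have hmem : ∀ θ : ℝ, θ ≤ 0 → π y₀ + θ • L w ∈ P := by
          intro θ hθ
          have hray : (y₀ + θ • w) ∈ {y : Fin e → ℝ | (∀ i, A i ⬝ᵥ y ≤ b i) ∧
              (∀ k, C k ⬝ᵥ y = dd k)} := by
            constructor
            · intro i
              rw [dotProduct_add, dotProduct_smul, smul_eq_mul]
              have h3 : θ * (A i ⬝ᵥ w) ≤ 0 := mul_nonpos_of_nonpos_of_nonneg hθ (hAw i)
              linarith [hy₀.1 i]
            · intro k
              rw [dotProduct_add, dotProduct_smul, hCw k, smul_zero, add_zero]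
              exact hy₀.2 k
          have hPmem : π (y₀ + θ • w) ∈ P := by
            rw [← himg]
            exact ⟨_, hray, rfl⟩
          have heq2 : π (y₀ + θ • w) = π y₀ + θ • L w := by
            rw [aff_decomp π (y₀ + θ • w), aff_decomp π y₀, map_add, _root_.map_smul]
            abel
          rwa [heq2] at hPmem
        have hLw : L w = 0 := by
          by_contra hne
          have hnorm : 0 < ‖L w‖ := norm_pos_iff.mpr hne
          set θ : ℝ := -((R + ‖π y₀‖ + 1) / ‖L w‖) with hθdef
          have hθ : θ ≤ 0 := by
            rw [hθdef, neg_nonpos]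
            positivity
          have hmem' := hR _ (hmem θ hθ)
          have hnθ : ‖θ • L w‖ = R + ‖π y₀‖ + 1 := by
            rw [norm_smul, Real.norm_eq_abs, hθdef, abs_neg,
              abs_of_nonneg (by positivity : (0:ℝ) ≤ (R + ‖π y₀‖ + 1) / ‖L w‖),
              div_mul_cancel₀ _ (ne_of_gt hnorm)]
          have h6 := norm_sub_norm_le (θ • L w) (-(π y₀))
          rw [sub_neg_eq_add, norm_neg] at h6
          rw [add_comm (θ • L w) (π y₀)] at h6
          linarith
        have h7 : π ys - π y₀ = L w := by
          rw [aff_decomp π ys, aff_decomp π y₀, hw, map_sub]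
          abel
        rw [hLw] at h7
        exact (sub_eq_zero.mp h7).symm
      obtain ⟨x₁, hx₁, x₂, hx₂, hne⟩ := hdim
      rw [← himg] at hx₁ hx₂
      obtain ⟨y₁, hy₁, rfl⟩ := hx₁
      obtain ⟨y₂, hy₂, rfl⟩ := hx₂
      exact hne ((hconst y₁ hy₁).trans (hconst y₂ hy₂).symm)
    obtain ⟨lam, mu, hlam, hcomp, hval⟩ :=
      farkas_system_infeasible (fun i => -(A i)) (fun i => -(b i)) C dd hinf
    refine ⟨lam, fun k => -(mu k), hlam, fun j => ?_, ?_⟩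
    · have hc := hcomp j
      have e1 : ∑ i, lam i * ((fun i => -(A i)) i j) = -(∑ i, lam i * A i j) := by
        rw [← Finset.sum_neg_distrib]
        exact Finset.sum_congr rfl fun i _ => by simp
      rw [e1] at hc
      have e2 : ∑ k, (-(mu k)) * C k j = -(∑ k, mu k * C k j) := by
        rw [← Finset.sum_neg_distrib]
        exact Finset.sum_congr rfl fun k _ => by ring
      rw [e2]
      linarith
    · have e1 : ∑ i, lam i * ((fun i => -(b i)) i) = -(∑ i, lam i * b i) := by
        rw [← Finset.sum_neg_distrib]
        exact Finset.sum_congr rfl fun i _ => by simp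
      rw [e1] at hval
      have e2 : ∑ k, (-(mu k)) * dd k = -(∑ k, mu k * dd k) := by
        rw [← Finset.sum_neg_distrib]
        exact Finset.sum_congr rfl fun k _ => by ring
      rw [e2]
      linarith
  obtain ⟨lamb, mub, hlambnn, hpadcomp, hpadval⟩ := hpad
  -- build the extended formulation of the epigraph
  set κ := (Fin d ⊕ (Fin m ⊕ Fin m')) with hκ
  set A2 : Fin m → κ → ℝ := fun i z => if z = Sum.inr (Sum.inl i) then -1 else 0 with hA2
  set C2 : Fin e → κ → ℝ :=
    fun j => Sum.elim (fun l => -(N l j)) (Sum.elim (fun i => A i j) (fun k => C k j)) with hC2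
  have hA2dot : ∀ (i : Fin m) (z : κ → ℝ), A2 i ⬝ᵥ z = -(z (Sum.inr (Sum.inl i))) := by
    intro i z
    rw [dotProduct]
    simp only [hA2, ite_mul, neg_one_mul, zero_mul]
    rw [Finset.sum_ite_eq' Finset.univ (Sum.inr (Sum.inl i) : κ) (fun w => -(z w))]
    simp
  have hC2dot : ∀ (j : Fin e) (z : κ → ℝ), C2 j ⬝ᵥ z =
      (∑ l, -(N l j) * z (Sum.inl l)) + ((∑ i, A i j * z (Sum.inr (Sum.inl i)))
        + (∑ k, C k j * z (Sum.inr (Sum.inr k)))) := by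
    intro j z
    rw [dotProduct, Fintype.sum_sum_type, Fintype.sum_sum_type]
    simp [hC2]
  -- the output affine map
  have hLlin : IsLinearMap ℝ (fun z : κ → ℝ => (fun r : Fin (d+1) =>
      if hr : r = Fin.last d then
        (∑ l, z (Sum.inl l) * p l) + ((∑ i, z (Sum.inr (Sum.inl i)) * b i)
          + (∑ k, z (Sum.inr (Sum.inr k)) * dd k))
      else z (Sum.inl (r.castPred hr)))) := by
    constructor
    · intro z₁ z₂
      funext r
      by_cases hr : r = Fin.last d
      · simp only [hr, dif_pos, Pi.add_apply, add_mul, Finset.sum_add_distrib]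
        ring
      · simp [hr]
    · intro a z
      funext r
      by_cases hr : r = Fin.last d
      · simp only [hr, dif_pos, Pi.smul_apply, smul_eq_mul]
        have g1 : ∑ l, (a * z (Sum.inl l)) * p l = a * ∑ l, z (Sum.inl l) * p l := by
          rw [Finset.mul_sum]
          exact Finset.sum_congr rfl fun l _ => by ring
        have g2 : ∑ i, (a * z (Sum.inr (Sum.inl i))) * b i
            = a * ∑ i, z (Sum.inr (Sum.inl i)) * b i := by
          rw [Finset.mul_sum]
          exact Finset.sum_congr rfl fun i _ => by ring
        have g3 : ∑ k, (a * z (Sum.inr (Sum.inr k))) * dd k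
            = a * ∑ k, z (Sum.inr (Sum.inr k)) * dd k := by
          rw [Finset.mul_sum]
          exact Finset.sum_congr rfl fun k _ => by ring
        rw [g1, g2, g3]
        ring
      · simp [hr]
  set Lmap := IsLinearMap.mk' _ hLlin with hLmap
  apply hasExtFormOfSize_of_index (epiSet (suppFn P)) A2 (fun _ => 0) C2 (fun _ => 0)
    Lmap.toAffineMap
  ext u
  constructor
  · rintro ⟨z, ⟨hz1, hz2⟩, rfl⟩
    set c : Fin d → ℝ := fun l => z (Sum.inl l) with hc
    set lam : Fin m → ℝ := fun i => z (Sum.inr (Sum.inl i)) with hlam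
    set mu : Fin m' → ℝ := fun k => z (Sum.inr (Sum.inr k)) with hmu
    have hlamnn : ∀ i, 0 ≤ lam i := by
      intro i
      have := hz1 i
      rw [hA2dot i z] at this
      simpa [hlam] using this
    have heqj : ∀ j, ∑ i, lam i * A i j + ∑ k, mu k * C k j = ∑ l, c l * N l j := by
      intro j
      have hz := hz2 j
      rw [hC2dot j z] at hz
      have e1 : ∑ l, -(N l j) * z (Sum.inl l) = -(∑ l, c l * N l j) := by
        rw [← Finset.sum_neg_distrib]
        exact Finset.sum_congr rfl fun l _ => by rw [hc]; ring
      have e2 : ∑ i, A i j * z (Sum.inr (Sum.inl i)) = ∑ i, lam i * A i j := by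
        exact Finset.sum_congr rfl fun i _ => by rw [hlam]; ring
      have e3 : ∑ k, C k j * z (Sum.inr (Sum.inr k)) = ∑ k, mu k * C k j := by
        exact Finset.sum_congr rfl fun k _ => by rw [hmu]; ring
      rw [e1, e2, e3] at hz
      linarith
    -- coordinates of the image point
    have hcs : ∀ l : Fin d, (Lmap.toAffineMap z) l.castSucc = c l := by
      intro l
      show (Lmap z) l.castSucc = c l
      have hne : l.castSucc ≠ Fin.last d := (Fin.castSucc_lt_last l).ne
      simp only [hLmap, IsLinearMap.mk'_apply, dif_neg hne, Fin.castPred_castSucc]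
      rfl
    have hlast : (Lmap.toAffineMap z) (Fin.last d) =
        (∑ l, c l * p l) + ((∑ i, lam i * b i) + (∑ k, mu k * dd k)) := by
      show (Lmap z) (Fin.last d) = _
      simp only [hLmap, IsLinearMap.mk'_apply, dif_pos rfl]
      rfl
    show suppFn P (fun l => (Lmap.toAffineMap z) l.castSucc) ≤
      (Lmap.toAffineMap z) (Fin.last d)
    rw [show (fun l => (Lmap.toAffineMap z) l.castSucc) = c from funext hcs, hlast]
    obtain ⟨xs, hxs, hmax⟩ := suppFn_exists_max hP c
    rw [← himg] at hxs
    obtain ⟨ys, hys, hysx⟩ := hxs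
    have hcompute : suppFn P c = (fun j => ∑ l, c l * N l j) ⬝ᵥ ys + ∑ l, c l * p l := by
      rw [← hmax, ← hysx, hdotc c ys]
    have hb := dual_bound A b C dd lam mu (fun j => ∑ l, c l * N l j) hlamnn heqj ys
      hys.1 hys.2
    rw [hcompute]
    linarith
  · intro hu
    set c : Fin d → ℝ := fun l => u l.castSucc with hc
    set t : ℝ := u (Fin.last d) with htdef
    have ht : suppFn P c ≤ t := hu
    obtain ⟨xs, hxs, hmax⟩ := suppFn_exists_max hP c
    rw [← himg] at hxs
    obtain ⟨ys, hys, hysx⟩ := hxs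
    have hdual := farkas_system_attained A b C dd (fun j => ∑ l, c l * N l j)
      (suppFn P c - ∑ l, c l * p l) ys hys ?_ ?_
    rotate_left
    · intro y hy1 hy2
      have hPy : π y ∈ P := by
        rw [← himg]
        exact ⟨y, ⟨hy1, hy2⟩, rfl⟩
      have := suppFn_le hP c hPy
      rw [hdotc c y] at this
      linarith
    · show (fun j => ∑ l, c l * N l j) ⬝ᵥ ys = suppFn P c - ∑ l, c l * p l
      have h9 := hdotc c ys
      rw [hysx] at h9
      rw [← hmax]
      linarith
    obtain ⟨lam0, mu0, hlam0, heq0, hval0⟩ := hdual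
    have hs0 : 0 ≤ t - suppFn P c := by linarith
    set s : ℝ := t - suppFn P c with hsdef
    set z : κ → ℝ := Sum.elim c (Sum.elim (fun i => lam0 i + s * lamb i)
      (fun k => mu0 k + s * mub k)) with hz
    refine ⟨z, ⟨?_, ?_⟩, ?_⟩
    · intro i
      rw [hA2dot i z]
      have : 0 ≤ lam0 i + s * lamb i :=
        add_nonneg (hlam0 i) (mul_nonneg hs0 (hlambnn i))
      simp only [hz, Sum.elim_inr, Sum.elim_inl]
      linarith
    · intro j
      rw [hC2dot j z]
      simp only [hz, Sum.elim_inr, Sum.elim_inl]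
      have E1 : ∑ i, A i j * (lam0 i + s * lamb i)
          = (∑ i, lam0 i * A i j) + s * ∑ i, lamb i * A i j := by
        rw [Finset.mul_sum, ← Finset.sum_add_distrib]
        exact Finset.sum_congr rfl fun i _ => by ring
      have E2 : ∑ k, C k j * (mu0 k + s * mub k)
          = (∑ k, mu0 k * C k j) + s * ∑ k, mub k * C k j := by
        rw [Finset.mul_sum, ← Finset.sum_add_distrib]
        exact Finset.sum_congr rfl fun k _ => by ring
      have E3 : ∑ l, -(N l j) * c l = -(∑ l, c l * N l j) := by
        rw [← Finset.sum_neg_distrib]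
        exact Finset.sum_congr rfl fun l _ => by ring
      rw [E1, E2, E3]
      have h1 := heq0 j
      have h2 := hpadcomp j
      linear_combination h1 + s * h2
    · funext r
      by_cases hr : r = Fin.last d
      · subst hr
        show (Lmap z) (Fin.last d) = u (Fin.last d)
        have hstep : (Lmap z) (Fin.last d) =
            (∑ l, z (Sum.inl l) * p l) + ((∑ i, z (Sum.inr (Sum.inl i)) * b i)
              + (∑ k, z (Sum.inr (Sum.inr k)) * dd k)) := by
          simp [hLmap, IsLinearMap.mk'_apply]
        rw [hstep]
        simp only [hz, Sum.elim_inl, Sum.elim_inr]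
        have F1 : ∑ i, (lam0 i + s * lamb i) * b i
            = (∑ i, lam0 i * b i) + s * ∑ i, lamb i * b i := by
          rw [Finset.mul_sum, ← Finset.sum_add_distrib]
          exact Finset.sum_congr rfl fun i _ => by ring
        have F2 : ∑ k, (mu0 k + s * mub k) * dd k
            = (∑ k, mu0 k * dd k) + s * ∑ k, mub k * dd k := by
          rw [Finset.mul_sum, ← Finset.sum_add_distrib]
          exact Finset.sum_congr rfl fun k _ => by ring
        have F3 : ∑ l, c l * p l = ∑ l, c l * p l := rfl
        rw [F1, F2]
        linear_combination hval0 + s * hpadval + hsdef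
      · show (Lmap z) r = u r
        simp only [hLmap, IsLinearMap.mk'_apply, dif_neg hr, hz, Sum.elim_inl]
        rw [hc]
        show u (r.castPred hr).castSucc = u r
        rw [Fin.castSucc_castPred]

end Main1

section Main2

open Matrix

lemma main2 {d : ℕ} {P : Set (Fin d → ℝ)} (hP : IsPolytope P) {m : ℕ}
    (h : HasExtFormOfSize (epiSet (suppFn P)) m) : HasExtFormOfSize P m := by
  classical
  obtain ⟨e, m', A, b, C, dd, π, himg⟩ := extForm_to_index _ h
  set L := π.linear with hL
  set p : Fin (d+1) → ℝ := π 0 with hp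
  set N : Fin (d+1) → Fin e → ℝ := fun r j => L (fun j' => if j = j' then 1 else 0) r with hN
  have hcoord : ∀ (y : Fin e → ℝ) (r : Fin (d+1)), π y r = N r ⬝ᵥ y + p r := by
    intro y r
    rw [aff_decomp π y, Pi.add_apply]
    congr 1
    exact lin_coord L y r
  -- dot identity
  have hdotx : ∀ (x : Fin d → ℝ) (y : Fin e → ℝ),
      (fun j => (∑ l, x l * N l.castSucc j) - N (Fin.last d) j) ⬝ᵥ y
        = (∑ l, x l * π y l.castSucc) - π y (Fin.last d)
          - (∑ l, x l * p l.castSucc) + p (Fin.last d) := by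
    intro x y
    have h1 : (fun j => (∑ l, x l * N l.castSucc j) - N (Fin.last d) j) ⬝ᵥ y
        = (fun j => ∑ l, x l * N l.castSucc j) ⬝ᵥ y - N (Fin.last d) ⬝ᵥ y := by
      rw [show (fun j => (∑ l, x l * N l.castSucc j) - N (Fin.last d) j)
        = (fun j => ∑ l, x l * N l.castSucc j) - N (Fin.last d) from rfl]
      exact sub_dotProduct _ _ _
    rw [h1, sum_mul_dot x (fun l : Fin d => N l.castSucc) y]
    have h2 : ∀ l : Fin d, N l.castSucc ⬝ᵥ y = π y l.castSucc - p l.castSucc := by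
      intro l
      rw [hcoord y l.castSucc]
      ring
    have h3 : N (Fin.last d) ⬝ᵥ y = π y (Fin.last d) - p (Fin.last d) := by
      rw [hcoord y (Fin.last d)]
      ring
    rw [h3]
    rw [Finset.sum_congr rfl fun l _ => by rw [h2 l]]
    rw [Finset.sum_congr rfl (fun l (_ : l ∈ Finset.univ) => mul_sub (x l) (π y l.castSucc)
      (p l.castSucc)), Finset.sum_sub_distrib]
    ring
  -- (0,…,0) lies in the epigraph
  have hzero : (0 : Fin (d+1) → ℝ) ∈ epiSet (suppFn P) := by
    show suppFn P (fun l => (0 : Fin (d+1) → ℝ) l.castSucc) ≤ (0 : Fin (d+1) → ℝ) (Fin.last d)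
    have : (fun l => (0 : Fin (d+1) → ℝ) l.castSucc) = (0 : Fin d → ℝ) := rfl
    rw [this, suppFn_zero hP]
    rfl
  rw [← himg] at hzero
  obtain ⟨y₀, hy₀Q, hy₀0⟩ := hzero
  -- the extension of P
  set κ := (Fin d ⊕ (Fin m ⊕ Fin m')) with hκ
  set A2 : Fin m → κ → ℝ := fun i z => if z = Sum.inr (Sum.inl i) then -1 else 0 with hA2
  set C2 : (Fin e ⊕ Unit) → κ → ℝ :=
    Sum.elim
      (fun j => Sum.elim (fun l => -(N l.castSucc j))
        (Sum.elim (fun i => A i j) (fun k => C k j)))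
      (fun _ => Sum.elim (fun l => p l.castSucc) (Sum.elim b dd)) with hC2
  set dd2 : (Fin e ⊕ Unit) → ℝ :=
    Sum.elim (fun j => -(N (Fin.last d) j)) (fun _ => p (Fin.last d)) with hdd2
  have hA2dot : ∀ (i : Fin m) (z : κ → ℝ), A2 i ⬝ᵥ z = -(z (Sum.inr (Sum.inl i))) := by
    intro i z
    rw [dotProduct]
    simp only [hA2, ite_mul, neg_one_mul, zero_mul]
    rw [Finset.sum_ite_eq' Finset.univ (Sum.inr (Sum.inl i) : κ) (fun w => -(z w))]
    simp
  have hC2dot1 : ∀ (j : Fin e) (z : κ → ℝ), C2 (Sum.inl j) ⬝ᵥ z =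
      (∑ l, -(N l.castSucc j) * z (Sum.inl l)) + ((∑ i, A i j * z (Sum.inr (Sum.inl i)))
        + (∑ k, C k j * z (Sum.inr (Sum.inr k)))) := by
    intro j z
    rw [dotProduct, Fintype.sum_sum_type, Fintype.sum_sum_type]
    simp [hC2]
  have hC2dot2 : ∀ (z : κ → ℝ), C2 (Sum.inr ()) ⬝ᵥ z =
      (∑ l, p l.castSucc * z (Sum.inl l)) + ((∑ i, b i * z (Sum.inr (Sum.inl i)))
        + (∑ k, dd k * z (Sum.inr (Sum.inr k)))) := by
    intro z
    rw [dotProduct, Fintype.sum_sum_type, Fintype.sum_sum_type]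
    simp [hC2]
  have hπ2lin : IsLinearMap ℝ (fun z : κ → ℝ => (fun r : Fin d => z (Sum.inl r))) := by
    constructor
    · intro z₁ z₂
      funext r
      rfl
    · intro a z
      funext r
      rfl
  set π2 := IsLinearMap.mk' _ hπ2lin with hπ2
  apply hasExtFormOfSize_of_index P A2 (fun _ => 0) C2 dd2 π2.toAffineMap
  ext x
  constructor
  · rintro ⟨z, ⟨hz1, hz2⟩, rfl⟩
    set xx : Fin d → ℝ := fun l => z (Sum.inl l) with hxx
    set lam : Fin m → ℝ := fun i => z (Sum.inr (Sum.inl i)) with hlam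
    set mu : Fin m' → ℝ := fun k => z (Sum.inr (Sum.inr k)) with hmu
    have hlamnn : ∀ i, 0 ≤ lam i := by
      intro i
      have := hz1 i
      rw [hA2dot i z] at this
      simpa [hlam] using this
    have heqj : ∀ j, ∑ i, lam i * A i j + ∑ k, mu k * C k j
        = (∑ l, xx l * N l.castSucc j) - N (Fin.last d) j := by
      intro j
      have hz := hz2 (Sum.inl j)
      rw [hC2dot1 j z] at hz
      have e1 : ∑ l, -(N l.castSucc j) * z (Sum.inl l) = -(∑ l, xx l * N l.castSucc j) := by
        rw [← Finset.sum_neg_distrib]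
        exact Finset.sum_congr rfl fun l _ => by rw [hxx]; ring
      have e2 : ∑ i, A i j * z (Sum.inr (Sum.inl i)) = ∑ i, lam i * A i j :=
        Finset.sum_congr rfl fun i _ => by rw [hlam]; ring
      have e3 : ∑ k, C k j * z (Sum.inr (Sum.inr k)) = ∑ k, mu k * C k j :=
        Finset.sum_congr rfl fun k _ => by rw [hmu]; ring
      rw [e1, e2, e3] at hz
      simp only [hdd2, Sum.elim_inl] at hz
      linarith
    have hequ : ∑ i, lam i * b i + ∑ k, mu k * dd k
        = p (Fin.last d) - ∑ l, xx l * p l.castSucc := by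
      have hz := hz2 (Sum.inr ())
      rw [hC2dot2 z] at hz
      have e1 : ∑ l, p l.castSucc * z (Sum.inl l) = ∑ l, xx l * p l.castSucc :=
        Finset.sum_congr rfl fun l _ => by rw [hxx]; ring
      have e2 : ∑ i, b i * z (Sum.inr (Sum.inl i)) = ∑ i, lam i * b i :=
        Finset.sum_congr rfl fun i _ => by rw [hlam]; ring
      have e3 : ∑ k, dd k * z (Sum.inr (Sum.inr k)) = ∑ k, mu k * dd k :=
        Finset.sum_congr rfl fun k _ => by rw [hmu]; ring
      rw [e1, e2, e3] at hz
      simp only [hdd2, Sum.elim_inr] at hz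
      linarith
    show (fun r => z (Sum.inl r)) ∈ P
    rw [mem_polytope_iff hP]
    intro c
    -- the point (c, suppFn c) lies in the epigraph, take a preimage
    have hmemepi : (Fin.snoc c (suppFn P c) : Fin (d+1) → ℝ) ∈ epiSet (suppFn P) := by
      show suppFn P (fun l => (Fin.snoc c (suppFn P c) : Fin (d+1) → ℝ) l.castSucc)
        ≤ (Fin.snoc c (suppFn P c) : Fin (d+1) → ℝ) (Fin.last d)
      rw [show (fun l => (Fin.snoc c (suppFn P c) : Fin (d+1) → ℝ) l.castSucc) = c from
        funext fun l => Fin.snoc_castSucc _ _ _, Fin.snoc_last]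
    rw [← himg] at hmemepi
    obtain ⟨y, hyQ, hyu⟩ := hmemepi
    have hpair := hdotx xx y
    have hbound := dual_bound A b C dd lam mu _ hlamnn heqj y hyQ.1 hyQ.2
    rw [hpair, hequ] at hbound
    have hcs : ∀ l, π y l.castSucc = c l := by
      intro l
      rw [hyu]
      exact Fin.snoc_castSucc _ _ _
    have hlast : π y (Fin.last d) = suppFn P c := by
      rw [hyu]
      exact Fin.snoc_last _ _
    have hfin : ∑ l, xx l * c l ≤ suppFn P c := by
      have := hbound
      rw [Finset.sum_congr rfl fun l (_ : l ∈ Finset.univ) => by rw [hcs l], hlast] at this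
      linarith
    calc ∑ mm, c mm * z (Sum.inl mm) = ∑ l, xx l * c l :=
          Finset.sum_congr rfl fun l _ => by rw [hxx]; ring
      _ ≤ suppFn P c := hfin
  · intro hxP
    have hdual := farkas_system_attained A b C dd
      (fun j => (∑ l, x l * N l.castSucc j) - N (Fin.last d) j)
      (p (Fin.last d) - ∑ l, x l * p l.castSucc) y₀ hy₀Q ?_ ?_
    rotate_left
    · intro y hy1 hy2
      have hepi : π y ∈ epiSet (suppFn P) := by
        rw [← himg]
        exact ⟨y, ⟨hy1, hy2⟩, rfl⟩
      have hsle : suppFn P (fun l => π y l.castSucc) ≤ π y (Fin.last d) := hepi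
      have hxle : ∑ l, (fun l => π y l.castSucc) l * x l ≤ suppFn P (fun l => π y l.castSucc) :=
        suppFn_le hP _ hxP
      have hkey : ∑ l, x l * π y l.castSucc ≤ π y (Fin.last d) := by
        have e1 : ∑ l, x l * π y l.castSucc = ∑ l, (fun l => π y l.castSucc) l * x l :=
          Finset.sum_congr rfl fun l _ => by ring
        rw [e1]
        linarith
      rw [hdotx x y]
      linarith
    · rw [hdotx x y₀]
      have hz0 : ∀ r, π y₀ r = 0 := fun r => congrFun hy₀0 r
      simp only [hz0, mul_zero, Finset.sum_const_zero, sub_zero, zero_sub]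
      ring
    obtain ⟨lam, mu, hlamnn, heqj, hequ⟩ := hdual
    set z : κ → ℝ := Sum.elim x (Sum.elim lam mu) with hz
    refine ⟨z, ⟨?_, ?_⟩, ?_⟩
    · intro i
      rw [hA2dot i z]
      simp only [hz, Sum.elim_inr, Sum.elim_inl]
      linarith [hlamnn i]
    · intro q
      rcases q with j | u
      · rw [hC2dot1 j z]
        simp only [hz, Sum.elim_inl, Sum.elim_inr, hdd2]
        have e1 : ∑ l, -(N l.castSucc j) * x l = -(∑ l, x l * N l.castSucc j) := by
          rw [← Finset.sum_neg_distrib]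
          exact Finset.sum_congr rfl fun l _ => by ring
        have e2 : ∑ i, A i j * lam i = ∑ i, lam i * A i j :=
          Finset.sum_congr rfl fun i _ => by ring
        have e3 : ∑ k, C k j * mu k = ∑ k, mu k * C k j :=
          Finset.sum_congr rfl fun k _ => by ring
        rw [e1, e2, e3]
        linarith [show ∑ i, lam i * A i j + ∑ k, mu k * C k j
          = (∑ l, x l * N l.castSucc j) - N (Fin.last d) j from heqj j]
      · rw [hC2dot2 z]
        simp only [hz, Sum.elim_inl, Sum.elim_inr, hdd2]
        have e1 : ∑ l, p l.castSucc * x l = ∑ l, x l * p l.castSucc :=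
          Finset.sum_congr rfl fun l _ => by ring
        have e2 : ∑ i, b i * lam i = ∑ i, lam i * b i :=
          Finset.sum_congr rfl fun i _ => by ring
        have e3 : ∑ k, dd k * mu k = ∑ k, mu k * dd k :=
          Finset.sum_congr rfl fun k _ => by ring
        rw [e1, e2, e3]
        linarith [hequ]
    · funext r
      show z (Sum.inl r) = x r
      simp [hz]

end Main2


/-- for a polytope `P` of dimension at least one (i.e. containing two distinct
points), `xc P = xc (epi f_P)`. -/
theorem xc_eq_xc_epigraph_support {d : ℕ} (P : Set (Fin d → ℝ)) (hP : IsPolytope P)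
    (hdim : ∃ x ∈ P, ∃ y ∈ P, x ≠ y) :
    xc P = xc (epiSet (suppFn P)) := by
  unfold xc
  congr 1
  ext m
  exact ⟨fun hm => main1 hP hdim hm, fun hm => main2 hP hm⟩
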